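/- For all non-empty sets $E,F\subset\overline{\mathbb{R}}^n$ with $\overline{E}\cap\overline{F}=\varnothing$, the quantity $\delta(E,F)$ is symmetric: $\delta_{\overline{\mathbb{R}}^n\setminus F}(E) = \delta_{\overline{\mathbb{R}}^n\setminus E}(F)$. -/

import Mathlib

open Real Set OnePoint

/-- The chordal (spherical) metric on `ℝ̂ⁿ = ℝⁿ ∪ {∞}`. -/
noncomputable def chordal {n : ℕ} (x y : OnePoint (EuclideanSpace ℝ (Fin n))) : ℝ :=
  Option.elim x
    (Option.elim y 0 (fun b => 1 / Real.sqrt (1 + ‖b‖ ^ 2)))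
    (fun a => Option.elim y (1 / Real.sqrt (1 + ‖a‖ ^ 2))
      (fun b => dist a b / (Real.sqrt (1 + ‖a‖ ^ 2) * Real.sqrt (1 + ‖b‖ ^ 2))))

set_option maxHeartbeats 1000000

open Filter Metric Bornology

variable {n : ℕ}
local notation "V" => EuclideanSpace ℝ (Fin n)
local notation "X" => OnePoint (EuclideanSpace ℝ (Fin n))

lemma sq1_pos (v : V) : 0 < Real.sqrt (1 + ‖v‖ ^ 2) := Real.sqrt_pos.2 (by positivity)
lemma one_le_sq1 (v : V) : 1 ≤ Real.sqrt (1 + ‖v‖ ^ 2) := by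
  have h : (1:ℝ) ≤ 1 + ‖v‖ ^ 2 := by nlinarith [sq_nonneg ‖v‖]
  calc (1:ℝ) = Real.sqrt 1 := by simp
    _ ≤ _ := Real.sqrt_le_sqrt h

lemma chordal_infty_infty : chordal (∞ : X) ∞ = 0 := rfl
lemma chordal_infty_coe (b : V) : chordal (∞ : X) (b : X) = 1 / Real.sqrt (1 + ‖b‖ ^ 2) := rfl
lemma chordal_coe_infty (a : V) : chordal (a : X) (∞ : X) = 1 / Real.sqrt (1 + ‖a‖ ^ 2) := rfl
lemma chordal_coe_coe (a b : V) :
    chordal (a : X) (b : X) = dist a b / (Real.sqrt (1 + ‖a‖ ^ 2) * Real.sqrt (1 + ‖b‖ ^ 2)) := rfl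

lemma chordal_comm (x y : X) : chordal x y = chordal y x := by
  cases x using OnePoint.rec <;> cases y using OnePoint.rec <;>
    simp [chordal_infty_infty, chordal_infty_coe, chordal_coe_infty, chordal_coe_coe, dist_comm,
      mul_comm]

lemma chordal_nonneg (x y : X) : 0 ≤ chordal x y := by
  cases x using OnePoint.rec <;> cases y using OnePoint.rec <;>
    first
      | exact le_refl _
      | (rw [chordal_infty_coe]; positivity)
      | (rw [chordal_coe_infty]; positivity)
      | (rw [chordal_coe_coe]; positivity)

lemma chordal_self (x : X) : chordal x x = 0 := by
  cases x using OnePoint.rec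
  · rfl
  · simp [chordal_coe_coe]

lemma chordal_pos {x y : X} (h : x ≠ y) : 0 < chordal x y := by
  cases x using OnePoint.rec <;> cases y using OnePoint.rec
  · exact absurd rfl h
  · rename_i b; rw [chordal_infty_coe]; positivity
  · rename_i a; rw [chordal_coe_infty]; positivity
  · rename_i a b
    rw [chordal_coe_coe]
    have hab : a ≠ b := fun e => h (by rw [e])
    have := sq1_pos (n := n) a
    have := sq1_pos (n := n) b
    have : (0:ℝ) < dist a b := dist_pos.2 hab
    positivity

lemma chordal_le_one (x y : X) : chordal x y ≤ 1 := by
  cases x using OnePoint.rec <;> cases y using OnePoint.rec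
  · exact zero_le_one
  · rename_i b
    rw [chordal_infty_coe, div_le_one (sq1_pos b)]; exact one_le_sq1 b
  · rename_i a
    rw [chordal_coe_infty, div_le_one (sq1_pos a)]; exact one_le_sq1 a
  · rename_i a b
    rw [chordal_coe_coe, div_le_one (by positivity)]
    have h1 : dist a b ≤ ‖a‖ + ‖b‖ := by
      simpa [dist_eq_norm] using norm_sub_le a b
    refine h1.trans ?_
    have h2 : (‖a‖ + ‖b‖) ^ 2 ≤ (Real.sqrt (1 + ‖a‖ ^ 2) * Real.sqrt (1 + ‖b‖ ^ 2)) ^ 2 := by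
      rw [mul_pow, Real.sq_sqrt (by positivity), Real.sq_sqrt (by positivity)]
      nlinarith [norm_nonneg a, norm_nonneg b, sq_nonneg (‖a‖ * ‖b‖ - 1)]
    calc ‖a‖ + ‖b‖ = Real.sqrt ((‖a‖ + ‖b‖) ^ 2) := (Real.sqrt_sq (by positivity)).symm
      _ ≤ Real.sqrt ((Real.sqrt (1 + ‖a‖ ^ 2) * Real.sqrt (1 + ‖b‖ ^ 2)) ^ 2) :=
          Real.sqrt_le_sqrt h2
      _ = _ := Real.sqrt_sq (by positivity)

noncomputable def gfun (x : X) : V := Option.elim x 0 (fun v => (1 + ‖v‖ ^ 2)⁻¹ • v)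
noncomputable def hfun (x : X) : ℝ :=
  Option.elim x (1/2) (fun v => (‖v‖ ^ 2 - 1) / (2 * (1 + ‖v‖ ^ 2)))

lemma continuous_gfun : Continuous (gfun (n := n)) := by
  rw [OnePoint.continuous_iff]
  constructor
  · rw [Filter.coclosedCompact_eq_cocompact]
    have h1 : Tendsto (fun t : ℝ => t / (1 + t ^ 2)) atTop (nhds 0) := by
      apply squeeze_zero' (g := fun t : ℝ => t⁻¹)
      · filter_upwards [eventually_ge_atTop (1:ℝ)] with t ht
        positivity
      · filter_upwards [eventually_ge_atTop (1:ℝ)] with t ht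
        rw [div_le_iff₀ (by positivity), inv_mul_eq_div, le_div_iff₀ (by linarith)]
        nlinarith
      · exact tendsto_inv_atTop_zero
    have h2 : Tendsto (fun v : V => ‖gfun (v : X)‖) (cocompact _) (nhds 0) := by
      have : (fun v : V => ‖gfun (v : X)‖) = (fun t : ℝ => t / (1 + t ^ 2)) ∘ (fun v : V => ‖v‖) := by
        funext v
        simp only [gfun, Option.elim, Function.comp_apply, norm_smul, norm_inv,
          Real.norm_eq_abs]
        rw [abs_of_pos (by positivity)]
        ring
      rw [this]
      exact h1.comp tendsto_norm_cocompact_atTop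
    rw [show (gfun (∞ : X)) = 0 from rfl]
    exact tendsto_zero_iff_norm_tendsto_zero.2 h2
  · apply Continuous.fun_smul (f := fun v : V => (1 + ‖v‖ ^ 2)⁻¹)
    · exact (continuous_const.add ((continuous_norm).pow 2)).inv₀ (fun v => (by positivity : (1:ℝ) + ‖v‖ ^ 2 ≠ 0))
    · exact continuous_id
lemma continuous_hfun : Continuous (hfun (n := n)) := by
  rw [OnePoint.continuous_iff]
  constructor
  · rw [Filter.coclosedCompact_eq_cocompact]
    have h1 : Tendsto (fun t : ℝ => (t ^ 2 - 1) / (2 * (1 + t ^ 2))) atTop (nhds (1/2)) := by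
      have he : (fun t : ℝ => (t ^ 2 - 1) / (2 * (1 + t ^ 2)))
          = fun t : ℝ => 1/2 - (1 + t ^ 2)⁻¹ := by
        funext t
        have : (1:ℝ) + t ^ 2 ≠ 0 := by positivity
        field_simp
        ring
      rw [he]
      have h3 : Tendsto (fun t : ℝ => (1 + t ^ 2)⁻¹) atTop (nhds 0) := by
        apply Tendsto.inv_tendsto_atTop
        apply tendsto_atTop_add_const_left
        exact tendsto_pow_atTop (two_ne_zero)
      simpa using tendsto_const_nhds.sub h3
    have : (fun v : V => hfun (v : X)) = (fun t : ℝ => (t ^ 2 - 1) / (2 * (1 + t ^ 2))) ∘ (fun v : V => ‖v‖) := rfl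
    rw [show (hfun (∞ : X)) = 1/2 from rfl, this]
    exact h1.comp tendsto_norm_cocompact_atTop
  · apply Continuous.div
    · exact (continuous_norm.pow 2).sub continuous_const
    · exact continuous_const.mul (continuous_const.add (continuous_norm.pow 2))
    · intro v; positivity

lemma chordal_eq_sqrt (x y : X) :
    chordal x y = Real.sqrt (‖gfun x - gfun y‖ ^ 2 + (hfun x - hfun y) ^ 2) := by
  have key : ∀ a : V, ‖gfun ((a:X)) - gfun (∞:X)‖ ^ 2 + (hfun (a:X) - hfun (∞:X)) ^ 2
      = 1 / (1 + ‖a‖ ^ 2) := by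
    intro a
    have hpa : (0:ℝ) < 1 + ‖a‖ ^ 2 := by positivity
    simp only [gfun, hfun, Option.elim, sub_zero, norm_smul, norm_inv, Real.norm_eq_abs,
      abs_of_pos hpa, mul_pow]
    rw [inv_pow]
    field_simp
    ring
  cases x using OnePoint.rec <;> cases y using OnePoint.rec
  · rw [show chordal (∞:X) (∞:X) = 0 from rfl]
    simp [gfun, hfun]
  · rename_i b
    have := key b
    rw [show ‖gfun (∞:X) - gfun (b:X)‖ = ‖gfun (b:X) - gfun (∞:X)‖ from norm_sub_rev _ _,
      show (hfun (∞:X) - hfun (b:X)) ^ 2 = (hfun (b:X) - hfun (∞:X)) ^ 2 by ring, this]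
    rw [show chordal (∞:X) (b:X) = 1 / Real.sqrt (1 + ‖b‖ ^ 2) from rfl]
    rw [one_div, ← Real.sqrt_inv, inv_eq_one_div]
  · rename_i a
    rw [key a, show chordal (a:X) (∞:X) = 1 / Real.sqrt (1 + ‖a‖ ^ 2) from rfl]
    rw [one_div, ← Real.sqrt_inv, inv_eq_one_div]
  · rename_i a b
    have hpa : (0:ℝ) < 1 + ‖a‖ ^ 2 := by positivity
    have hpb : (0:ℝ) < 1 + ‖b‖ ^ 2 := by positivity
    have key2 : ‖gfun ((a:X)) - gfun ((b:X))‖ ^ 2 + (hfun (a:X) - hfun (b:X)) ^ 2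
        = ‖a - b‖ ^ 2 / ((1 + ‖a‖ ^ 2) * (1 + ‖b‖ ^ 2)) := by
      simp only [gfun, hfun, Option.elim]
      rw [norm_sub_sq_real, norm_sub_sq_real, real_inner_smul_left, real_inner_smul_right]
      simp only [norm_smul, norm_inv, Real.norm_eq_abs, abs_of_pos hpa, abs_of_pos hpb,
        mul_pow, inv_pow]
      field_simp
      ring
    rw [show chordal (a:X) (b:X)
        = dist a b / (Real.sqrt (1 + ‖a‖ ^ 2) * Real.sqrt (1 + ‖b‖ ^ 2)) from rfl, key2,
      dist_eq_norm]
    rw [Real.sqrt_div' _ (by positivity), Real.sqrt_mul (le_of_lt hpa), Real.sqrt_sq (norm_nonneg _)]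

lemma exists_radius {U : Set X} (hU : IsOpen U) (hinf : (∞ : X) ∈ U) :
    ∃ R : ℝ, ∀ v : V, R < ‖v‖ → (v : X) ∈ U := by
  have hC : IsCompact Uᶜ := (hU.isClosed_compl).isCompact
  have hsub : Uᶜ ⊆ range ((↑) : V → X) := by
    intro z hz
    rcases z with - | v
    · exact absurd hinf hz
    · exact ⟨v, rfl⟩
  have himg : ((↑) : V → X) '' (((↑) : V → X) ⁻¹' Uᶜ) = Uᶜ := Set.image_preimage_eq_of_subset hsub
  have hD : IsCompact (((↑) : V → X) ⁻¹' Uᶜ) := by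
    rw [OnePoint.isOpenEmbedding_coe.toIsEmbedding.isCompact_iff, himg]
    exact hC
  obtain ⟨r, hr⟩ := (isBounded_iff_subset_closedBall (0 : V)).1 hD.isBounded
  refine ⟨r, fun v hv => ?_⟩
  by_contra hmem
  have : v ∈ closedBall (0 : V) r := hr hmem
  rw [mem_closedBall, dist_zero_right] at this
  linarith

lemma eventually_path_mem {U : Set X} (hU : IsOpen U) {v0 : V} (h : (v0 : X) ∈ U) (d : V) :
    ∀ᶠ t in nhdsWithin (0 : ℝ) (Ioi 0), ((v0 + t • d : V) : X) ∈ U := by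
  have hc : ContinuousAt (fun t : ℝ => ((v0 + t • d : V) : X)) 0 := by
    apply OnePoint.continuous_coe.continuousAt.comp
    exact (continuous_const.add ((continuous_id).smul continuous_const)).continuousAt
  have := hc.eventually_mem (by simpa using hU.mem_nhds h)
  exact this.filter_mono nhdsWithin_le_nhds

lemma exists_ne_mem {U : Set X} (hU : IsOpen U) {x₀ : X} (hx₀ : x₀ ∈ U)
    (hc : PreconnectedSpace X) : ∃ x₁ ∈ U, x₁ ≠ x₀ := by
  by_contra hcon
  push_neg at hcon
  have hUx : U = {x₀} := Set.eq_singleton_iff_unique_mem.2 ⟨hx₀, hcon⟩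
  have hclopen : IsClopen ({x₀} : Set X) := ⟨isClosed_singleton, hUx ▸ hU⟩
  rcases isClopen_iff.mp hclopen with h | h
  · exact (Set.singleton_ne_empty x₀) h
  · have h1 : (∞ : X) ∈ ({x₀} : Set X) := h ▸ Set.mem_univ _
    have h2 : ((0 : V) : X) ∈ ({x₀} : Set X) := h ▸ Set.mem_univ _
    rw [Set.mem_singleton_iff] at h1 h2
    exact OnePoint.coe_ne_infty (0 : V) (h2.trans h1.symm)

lemma continuous_chordal : Continuous fun p : X × X => chordal p.1 p.2 := by
  have he : (fun p : X × X => chordal p.1 p.2) = fun p : X × X =>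
      Real.sqrt (‖gfun p.1 - gfun p.2‖ ^ 2 + (hfun p.1 - hfun p.2) ^ 2) :=
    funext fun p => chordal_eq_sqrt p.1 p.2
  rw [he]
  exact Real.continuous_sqrt.comp
    ((((continuous_gfun.comp continuous_fst).sub (continuous_gfun.comp continuous_snd)).norm.pow 2).add
      (((continuous_hfun.comp continuous_fst).sub (continuous_hfun.comp continuous_snd)).pow 2))

lemma inner_dir_identity (u wv : V) (hu : u ≠ 0) (hwv : wv ≠ 0) :
    (inner ℝ u ((‖u‖ ^ 2)⁻¹ • u - (‖wv‖ ^ 2)⁻¹ • wv) : ℝ) * ‖wv‖ ^ 2 -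
      (inner ℝ wv ((‖u‖ ^ 2)⁻¹ • u - (‖wv‖ ^ 2)⁻¹ • wv) : ℝ) * ‖u‖ ^ 2 = ‖u - wv‖ ^ 2 := by
  have e1 : (‖u‖ ^ 2)⁻¹ * ‖u‖ ^ 2 = 1 := inv_mul_cancel₀ (pow_ne_zero 2 (norm_ne_zero_iff.2 hu))
  have e2 : (‖wv‖ ^ 2)⁻¹ * ‖wv‖ ^ 2 = 1 := inv_mul_cancel₀ (pow_ne_zero 2 (norm_ne_zero_iff.2 hwv))
  rw [inner_sub_right, inner_sub_right, real_inner_smul_right, real_inner_smul_right,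
    real_inner_smul_right, real_inner_smul_right, real_inner_self_eq_norm_sq,
    real_inner_self_eq_norm_sq, norm_sub_sq_real]
  have hcomm : (inner ℝ u wv : ℝ) = inner ℝ wv u := real_inner_comm wv u
  linear_combination (‖wv‖ ^ 2 - (inner ℝ u wv : ℝ)) * e1 + (‖u‖ ^ 2 - (inner ℝ u wv : ℝ)) * e2 +
    (‖u‖ ^ 2 * (‖u‖ ^ 2)⁻¹) * hcomm

lemma exists_nearby_bigger {U : Set X} (hU : IsOpen U) {x₀ a y : X}
    (hx₀ : x₀ ∈ U) (haU : a ∉ U) (hay : a ≠ y) (hax : a ≠ x₀) (hc : PreconnectedSpace X) :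
    ∃ x₁ ∈ U, chordal x₀ y * chordal a x₁ < chordal x₁ y * chordal a x₀ := by
  by_cases hxy : x₀ = y
  · obtain ⟨x₁, hx₁U, hx₁ne⟩ := exists_ne_mem hU hx₀ hc
    refine ⟨x₁, hx₁U, ?_⟩
    subst hxy
    rw [chordal_self, zero_mul]
    exact mul_pos (chordal_pos hx₁ne) (chordal_pos hax)
  · have hax₁ : ∀ z : X, z ∈ U → a ≠ z := fun z hz he => haU (he ▸ hz)
    cases x₀ using OnePoint.rec with
    | infty =>
      cases y using OnePoint.rec with
      | infty => exact absurd rfl hxy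
      | coe vy =>
        cases a using OnePoint.rec with
        | infty => exact absurd rfl hax
        | coe va =>
          obtain ⟨R, hR⟩ := exists_radius hU hx₀
          have hvavy : va ≠ vy := fun h => hay (by rw [h])
          have hd0 : (0:ℝ) < ‖va - vy‖ := by rwa [norm_sub_pos_iff]
          set t : ℝ := (max R 0 + ‖va‖ + 1) / ‖va - vy‖ with ht_def
          have ht : 0 < t := by positivity
          set w : V := va + t • (va - vy) with hw
          have hsm : ‖t • (va - vy)‖ = max R 0 + ‖va‖ + 1 := by
            rw [norm_smul, Real.norm_eq_abs, abs_of_pos ht, ht_def,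
              div_mul_cancel₀ _ (ne_of_gt hd0)]
          have hnormw : R < ‖w‖ := by
            have h1 : ‖t • (va - vy)‖ ≤ ‖w‖ + ‖va‖ := by
              have e : t • (va - vy) = w - va := by rw [hw]; abel
              rw [e]
              exact norm_sub_le _ _
            have := le_max_left R 0
            linarith [hsm ▸ h1]
          refine ⟨(w : X), hR w hnormw, ?_⟩
          have key : dist va w < dist w vy := by
            have e1 : va - w = -(t • (va - vy)) := by rw [hw]; abel
            have e2 : w - vy = (1 + t) • (va - vy) := by
              rw [hw]; module
            rw [dist_eq_norm, dist_eq_norm, e1, e2, norm_neg, norm_smul, norm_smul,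
              Real.norm_eq_abs, Real.norm_eq_abs, abs_of_pos ht, abs_of_pos (by linarith : (0:ℝ) < 1 + t)]
            nlinarith
          rw [chordal_infty_coe, chordal_coe_coe, chordal_coe_coe, chordal_coe_infty]
          have L : 1 / Real.sqrt (1 + ‖vy‖ ^ 2) *
              (dist va w / (Real.sqrt (1 + ‖va‖ ^ 2) * Real.sqrt (1 + ‖w‖ ^ 2))) =
              dist va w / (Real.sqrt (1 + ‖vy‖ ^ 2) * Real.sqrt (1 + ‖va‖ ^ 2) * Real.sqrt (1 + ‖w‖ ^ 2)) := by
            ring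
          have Rr : dist w vy / (Real.sqrt (1 + ‖w‖ ^ 2) * Real.sqrt (1 + ‖vy‖ ^ 2)) *
              (1 / Real.sqrt (1 + ‖va‖ ^ 2)) =
              dist w vy / (Real.sqrt (1 + ‖vy‖ ^ 2) * Real.sqrt (1 + ‖va‖ ^ 2) * Real.sqrt (1 + ‖w‖ ^ 2)) := by
            ring
          rw [L, Rr]
          have hD : (0:ℝ) < Real.sqrt (1 + ‖vy‖ ^ 2) * Real.sqrt (1 + ‖va‖ ^ 2) * Real.sqrt (1 + ‖w‖ ^ 2) := by
            have := sq1_pos (n := n) vy; have := sq1_pos (n := n) va; have := sq1_pos (n := n) w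
            positivity
          gcongr
    | coe v0 =>
      have hsmall : ∀ dvec : V, ∀ c : ℝ, 0 < c →
          ∃ t : ℝ, 0 < t ∧ t < c ∧ ((v0 + t • dvec : V) : X) ∈ U := by
        intro dvec c hcpos
        have ev1 := eventually_path_mem hU hx₀ dvec
        have ev2 : ∀ᶠ t in nhdsWithin (0:ℝ) (Ioi 0), t ∈ Ioo (0:ℝ) c :=
          eventually_of_mem (Ioo_mem_nhdsGT_of_mem ⟨le_refl 0, hcpos⟩) (fun _ h => h)
        obtain ⟨t, ht1, ht2⟩ := (ev1.and ev2).exists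
        exact ⟨t, ht2.1, ht2.2, ht1⟩
      cases y using OnePoint.rec with
      | infty =>
        cases a using OnePoint.rec with
        | infty => exact absurd rfl hay
        | coe va =>
          have hvav0 : va ≠ v0 := fun h => hax (by rw [h])
          have hd0 : (0:ℝ) < ‖va - v0‖ := by rwa [norm_sub_pos_iff]
          obtain ⟨t, ht0, ht1, htU⟩ := hsmall (va - v0) 1 one_pos
          set w : V := v0 + t • (va - v0) with hw
          refine ⟨(w : X), htU, ?_⟩
          have key : dist va w < dist va v0 := by
            have e1 : va - w = (1 - t) • (va - v0) := by rw [hw]; module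
            rw [dist_eq_norm, dist_eq_norm, e1, norm_smul, Real.norm_eq_abs,
              abs_of_pos (by linarith : (0:ℝ) < 1 - t)]
            nlinarith
          rw [chordal_coe_infty, chordal_coe_coe, chordal_coe_infty, chordal_coe_coe]
          have L : 1 / Real.sqrt (1 + ‖v0‖ ^ 2) *
              (dist va w / (Real.sqrt (1 + ‖va‖ ^ 2) * Real.sqrt (1 + ‖w‖ ^ 2))) =
              dist va w / (Real.sqrt (1 + ‖v0‖ ^ 2) * Real.sqrt (1 + ‖va‖ ^ 2) * Real.sqrt (1 + ‖w‖ ^ 2)) := by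
            ring
          have Rr : 1 / Real.sqrt (1 + ‖w‖ ^ 2) *
              (dist va v0 / (Real.sqrt (1 + ‖va‖ ^ 2) * Real.sqrt (1 + ‖v0‖ ^ 2))) =
              dist va v0 / (Real.sqrt (1 + ‖v0‖ ^ 2) * Real.sqrt (1 + ‖va‖ ^ 2) * Real.sqrt (1 + ‖w‖ ^ 2)) := by
            ring
          rw [L, Rr]
          gcongr
      | coe vy =>
        have hv0vy : v0 ≠ vy := fun h => hxy (by rw [h])
        cases a using OnePoint.rec with
        | infty =>
          have hd0 : (0:ℝ) < ‖v0 - vy‖ := by rwa [norm_sub_pos_iff]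
          obtain ⟨t, ht0, ht1, htU⟩ := hsmall (v0 - vy) 1 one_pos
          set w : V := v0 + t • (v0 - vy) with hw
          refine ⟨(w : X), htU, ?_⟩
          have key : dist v0 vy < dist w vy := by
            have e1 : w - vy = (1 + t) • (v0 - vy) := by rw [hw]; module
            rw [dist_eq_norm, dist_eq_norm, e1, norm_smul, Real.norm_eq_abs,
              abs_of_pos (by linarith : (0:ℝ) < 1 + t)]
            nlinarith
          rw [chordal_coe_coe, chordal_infty_coe, chordal_infty_coe, chordal_coe_coe]
          have L : dist v0 vy / (Real.sqrt (1 + ‖v0‖ ^ 2) * Real.sqrt (1 + ‖vy‖ ^ 2)) *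
              (1 / Real.sqrt (1 + ‖w‖ ^ 2)) =
              dist v0 vy / (Real.sqrt (1 + ‖v0‖ ^ 2) * Real.sqrt (1 + ‖vy‖ ^ 2) * Real.sqrt (1 + ‖w‖ ^ 2)) := by
            ring
          have Rr : dist w vy / (Real.sqrt (1 + ‖w‖ ^ 2) * Real.sqrt (1 + ‖vy‖ ^ 2)) *
              (1 / Real.sqrt (1 + ‖v0‖ ^ 2)) =
              dist w vy / (Real.sqrt (1 + ‖v0‖ ^ 2) * Real.sqrt (1 + ‖vy‖ ^ 2) * Real.sqrt (1 + ‖w‖ ^ 2)) := by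
            ring
          rw [L, Rr]
          gcongr
        | coe va =>
          have hvav0 : va ≠ v0 := fun h => hax (by rw [h])
          have hvavy : va ≠ vy := fun h => hay (by rw [h])
          set u : V := v0 - vy with hu_def
          set wv : V := v0 - va with hwv_def
          have hu0 : (0:ℝ) < ‖u‖ := by rw [hu_def]; rwa [norm_sub_pos_iff]
          have hwv0 : (0:ℝ) < ‖wv‖ := by
            rw [hwv_def, norm_sub_pos_iff]; exact fun h => hvav0 h.symm
          set d : V := (‖u‖ ^ 2)⁻¹ • u - (‖wv‖ ^ 2)⁻¹ • wv with hd_def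
          have hA : (inner ℝ u d : ℝ) * ‖wv‖ ^ 2 - (inner ℝ wv d : ℝ) * ‖u‖ ^ 2 = ‖u - wv‖ ^ 2 := by
            rw [hd_def]
            exact inner_dir_identity u wv (norm_pos_iff.1 hu0) (norm_pos_iff.1 hwv0)
          have huwv : u - wv = va - vy := by rw [hu_def, hwv_def]; abel
          have hApos : (0:ℝ) < ‖u - wv‖ ^ 2 := by
            rw [huwv]
            have : (0:ℝ) < ‖va - vy‖ := by rwa [norm_sub_pos_iff]
            positivity
          set B : ℝ := ‖d‖ ^ 2 * (‖wv‖ ^ 2 - ‖u‖ ^ 2) with hB_def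
          obtain ⟨t, ht0, htc, htU⟩ := hsmall d (‖u - wv‖ ^ 2 / (1 + |B|)) (by positivity)
          set w : V := v0 + t • d with hw
          refine ⟨(w : X), htU, ?_⟩
          have htc' : t * (1 + |B|) < ‖u - wv‖ ^ 2 := by
            rwa [lt_div_iff₀ (by positivity)] at htc
          have nu2 : ‖u + t • d‖ ^ 2 = ‖u‖ ^ 2 + 2 * t * inner ℝ u d + t ^ 2 * ‖d‖ ^ 2 := by
            rw [norm_add_sq_real, real_inner_smul_right, norm_smul, Real.norm_eq_abs,
              mul_pow, sq_abs]
            ring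
          have nw2 : ‖wv + t • d‖ ^ 2 = ‖wv‖ ^ 2 + 2 * t * inner ℝ wv d + t ^ 2 * ‖d‖ ^ 2 := by
            rw [norm_add_sq_real, real_inner_smul_right, norm_smul, Real.norm_eq_abs,
              mul_pow, sq_abs]
            ring
          have key2 : ‖u‖ ^ 2 * ‖wv + t • d‖ ^ 2 < ‖u + t • d‖ ^ 2 * ‖wv‖ ^ 2 := by
            rw [nu2, nw2]
            have hb1 : -|B| ≤ B := neg_abs_le B
            nlinarith [mul_lt_mul_of_pos_left htc' ht0, mul_pos ht0 hApos, sq_nonneg t,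
              mul_pos (mul_pos ht0 ht0) hApos]
          have key : ‖u‖ * ‖wv + t • d‖ < ‖u + t • d‖ * ‖wv‖ := by
            apply lt_of_pow_lt_pow_left₀ 2 (by positivity)
            calc (‖u‖ * ‖wv + t • d‖) ^ 2 = ‖u‖ ^ 2 * ‖wv + t • d‖ ^ 2 := by ring
              _ < ‖u + t • d‖ ^ 2 * ‖wv‖ ^ 2 := key2
              _ = (‖u + t • d‖ * ‖wv‖) ^ 2 := by ring
          have ed1 : dist v0 vy = ‖u‖ := by rw [dist_eq_norm, hu_def]
          have ed2 : dist va w = ‖wv + t • d‖ := by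
            rw [dist_eq_norm, ← norm_neg]
            congr 1
            rw [hw, hwv_def]
            abel
          have ed3 : dist w vy = ‖u + t • d‖ := by
            rw [dist_eq_norm]
            congr 1
            rw [hw, hu_def]
            abel
          have ed4 : dist va v0 = ‖wv‖ := by
            rw [dist_eq_norm, ← norm_neg]
            congr 1
            rw [hwv_def]
            abel
          have keyd : dist v0 vy * dist va w < dist w vy * dist va v0 := by
            rw [ed1, ed2, ed3, ed4]; exact key
          rw [chordal_coe_coe, chordal_coe_coe, chordal_coe_coe, chordal_coe_coe]
          have L : dist v0 vy / (Real.sqrt (1 + ‖v0‖ ^ 2) * Real.sqrt (1 + ‖vy‖ ^ 2)) *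
              (dist va w / (Real.sqrt (1 + ‖va‖ ^ 2) * Real.sqrt (1 + ‖w‖ ^ 2))) =
              dist v0 vy * dist va w / (Real.sqrt (1 + ‖v0‖ ^ 2) * Real.sqrt (1 + ‖vy‖ ^ 2) *
                Real.sqrt (1 + ‖va‖ ^ 2) * Real.sqrt (1 + ‖w‖ ^ 2)) := by
            ring
          have Rr : dist w vy / (Real.sqrt (1 + ‖w‖ ^ 2) * Real.sqrt (1 + ‖vy‖ ^ 2)) *
              (dist va v0 / (Real.sqrt (1 + ‖va‖ ^ 2) * Real.sqrt (1 + ‖v0‖ ^ 2))) =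
              dist w vy * dist va v0 / (Real.sqrt (1 + ‖v0‖ ^ 2) * Real.sqrt (1 + ‖vy‖ ^ 2) *
                Real.sqrt (1 + ‖va‖ ^ 2) * Real.sqrt (1 + ‖w‖ ^ 2)) := by
            ring
          rw [L, Rr]
          gcongr


/-- The cross-ratio `|a,x,b,y|` on `ℝ̂ⁿ`, defined via the chordal metric. -/
noncomputable def qCross {n : ℕ} (a x b y : OnePoint (EuclideanSpace ℝ (Fin n))) : ℝ :=
  chordal a b * chordal x y / (chordal a x * chordal b y)


lemma qCross_nonneg (a x b y : X) : 0 ≤ qCross a x b y :=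
  div_nonneg (mul_nonneg (chordal_nonneg _ _) (chordal_nonneg _ _))
    (mul_nonneg (chordal_nonneg _ _) (chordal_nonneg _ _))

lemma qCross_swap (a x b y : X) : qCross a x b y = qCross x a y b := by
  unfold qCross
  rw [chordal_comm x a, chordal_comm y b, chordal_comm x y, chordal_comm a b]
  ring

lemma continuousAt_logq_pair (a b : X) {z : X × X} (ha : a ≠ z.1) (hb : b ≠ z.2) :
    ContinuousAt (fun p : X × X => Real.log (1 + qCross a p.1 b p.2)) z := by
  have c1 : ContinuousAt (fun p : X × X => chordal a p.1) z :=
    (continuous_chordal.comp (continuous_const.prodMk continuous_fst)).continuousAt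
  have c2 : ContinuousAt (fun p : X × X => chordal p.1 p.2) z :=
    continuous_chordal.continuousAt
  have c3 : ContinuousAt (fun p : X × X => chordal b p.2) z :=
    (continuous_chordal.comp (continuous_const.prodMk continuous_snd)).continuousAt
  have hden : chordal a z.1 * chordal b z.2 ≠ 0 :=
    (mul_pos (chordal_pos ha) (chordal_pos hb)).ne'
  have cq : ContinuousAt (fun p : X × X => 1 + qCross a p.1 b p.2) z := by
    exact continuousAt_const.add (((continuousAt_const.mul c2).div (c1.mul c3) hden))
  apply ContinuousAt.log cq
  have := qCross_nonneg a z.1 b z.2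
  positivity

lemma continuousAt_logq (a b y : X) {z : X} (ha : a ≠ z) (hb : b ≠ y) :
    ContinuousAt (fun w : X => Real.log (1 + qCross a w b y)) z := by
  have hcm : ContinuousAt (fun w : X => (w, y)) z :=
    (continuous_id.prodMk continuous_const).continuousAt
  show ContinuousAt ((fun p : X × X => Real.log (1 + qCross a p.1 b p.2)) ∘ (fun w : X => (w, y))) z
  exact ContinuousAt.comp (f := fun w : X => (w, y)) (continuousAt_logq_pair a b (z := (z, y)) ha hb) hcm

lemma exists_frontier_ge {E F : Set X} (hd : closure E ∩ closure F = ∅)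
    (hc : PreconnectedSpace X) {a b y x : X} (ha : a ∈ closure F) (hb : b ∈ closure F)
    (hy : y ∈ closure E) (hx : x ∈ closure E) :
    ∃ x' ∈ frontier (closure E),
      Real.log (1 + qCross a x b y) ≤ Real.log (1 + qCross a x' b y) := by
  have hdis : ∀ p ∈ closure E, ∀ q ∈ closure F, p ≠ q := by
    intro p hp q hq he
    exact Set.eq_empty_iff_forall_notMem.1 hd p ⟨hp, he ▸ hq⟩
  have hK : IsCompact (closure E) := isClosed_closure.isCompact
  have hFront : (frontier (closure E)).Nonempty := by
    by_contra h
    rw [Set.not_nonempty_iff_eq_empty] at h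
    rcases isClopen_iff.mp (isClopen_iff_frontier_eq_empty.2 h) with h' | h'
    · exact (h' ▸ hy : y ∈ (∅ : Set X))
    · exact hdis a (h' ▸ Set.mem_univ a) a ha rfl
  have hcont : ContinuousOn (fun w : X => Real.log (1 + qCross a w b y)) (closure E) := by
    intro z hz
    exact (continuousAt_logq a b y (hdis z hz a ha).symm (hdis y hy b hb).symm).continuousWithinAt
  obtain ⟨x₀, hx₀K, hmax⟩ := hK.exists_isMaxOn ⟨y, hy⟩ hcont
  by_cases hfr : x₀ ∈ frontier (closure E)
  · exact ⟨x₀, hfr, hmax hx⟩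
  · have hint : x₀ ∈ interior (closure E) := by
      rw [(isClosed_closure (s := E)).frontier_eq] at hfr
      simp only [Set.mem_diff, not_and, not_not] at hfr
      exact hfr hx₀K
    by_cases hab : chordal a b = 0
    · obtain ⟨x', hx'⟩ := hFront
      refine ⟨x', hx', ?_⟩
      simp [qCross, hab]
    · exfalso
      have haU : a ∉ interior (closure E) := fun hmem =>
        hdis a (interior_subset hmem) a ha rfl
      have hay : a ≠ y := (hdis y hy a ha).symm
      have hax : a ≠ x₀ := (hdis x₀ hx₀K a ha).symm
      obtain ⟨x₁, hx₁U, hkey⟩ :=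
        exists_nearby_bigger isOpen_interior hint haU hay hax hc
      have hx₁K : x₁ ∈ closure E := interior_subset hx₁U
      have p1 : 0 < chordal a x₀ := chordal_pos hax
      have p2 : 0 < chordal a x₁ := chordal_pos ((hdis x₁ hx₁K a ha).symm)
      have p3 : 0 < chordal b y := chordal_pos ((hdis y hy b hb).symm)
      have p4 : 0 < chordal a b := lt_of_le_of_ne (chordal_nonneg _ _) (Ne.symm hab)
      have h1 : qCross a x₀ b y < qCross a x₁ b y := by
        unfold qCross
        rw [div_lt_div_iff₀ (by positivity) (by positivity)]
        nlinarith [mul_lt_mul_of_pos_left hkey (mul_pos p4 p3)]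
      have h2 : Real.log (1 + qCross a x₁ b y) ≤ Real.log (1 + qCross a x₀ b y) := hmax hx₁K
      have h3 : Real.log (1 + qCross a x₀ b y) < Real.log (1 + qCross a x₁ b y) := by
        apply Real.log_lt_log _ (by linarith)
        have := qCross_nonneg a x₀ b y
        linarith
      linarith


/-- The Möbius metric `δ_G` for `G ⊆ ℝ̂ⁿ`. -/
noncomputable def deltaHat {n : ℕ} (G : Set (OnePoint (EuclideanSpace ℝ (Fin n))))
    (x y : OnePoint (EuclideanSpace ℝ (Fin n))) : ℝ :=
  sSup ((fun p : OnePoint (EuclideanSpace ℝ (Fin n)) × OnePoint (EuclideanSpace ℝ (Fin n)) =>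
    Real.log (1 + qCross p.1 x p.2 y)) '' (frontier G ×ˢ frontier G))

/-- The `δ_G`-diameter of a set `E ⊆ G`: `δ_G(E) = sup_{x,y ∈ E} δ_G(x,y)`. -/
noncomputable def deltaDiam {n : ℕ} (G E : Set (OnePoint (EuclideanSpace ℝ (Fin n)))) : ℝ :=
  sSup ((fun p : OnePoint (EuclideanSpace ℝ (Fin n)) × OnePoint (EuclideanSpace ℝ (Fin n)) =>
    deltaHat G p.1 p.2) '' (E ×ˢ E))

lemma sSup_sSup_image {α β : Type*} (f : α → β → ℝ) (S : Set α) (T : Set β)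
    (hS : S.Nonempty) (hT : T.Nonempty) (M : ℝ) (hM : ∀ s ∈ S, ∀ t ∈ T, f s t ≤ M) :
    sSup ((fun s => sSup ((fun t => f s t) '' T)) '' S)
      = sSup ((fun p : α × β => f p.1 p.2) '' (S ×ˢ T)) := by
  have hbdd2 : BddAbove ((fun p : α × β => f p.1 p.2) '' (S ×ˢ T)) := by
    refine ⟨M, ?_⟩
    rintro v ⟨⟨s, t⟩, ⟨hs, ht⟩, rfl⟩
    exact hM s hs t ht
  apply le_antisymm
  · apply csSup_le (hS.image _)
    rintro v ⟨s, hs, rfl⟩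
    apply csSup_le (hT.image _)
    rintro v ⟨t, ht, rfl⟩
    exact le_csSup hbdd2 ⟨(s, t), ⟨hs, ht⟩, rfl⟩
  · apply csSup_le ((hS.prod hT).image _)
    rintro v ⟨⟨s, t⟩, ⟨hs, ht⟩, rfl⟩
    have hb1 : BddAbove ((fun t => f s t) '' T) :=
      ⟨M, by rintro v ⟨t', ht', rfl⟩; exact hM s hs t' ht'⟩
    have h1 : f s t ≤ sSup ((fun t => f s t) '' T) := le_csSup hb1 ⟨t, ht, rfl⟩
    have hb2 : BddAbove ((fun s => sSup ((fun t => f s t) '' T)) '' S) := by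
      refine ⟨M, ?_⟩
      rintro v ⟨s', hs', rfl⟩
      apply csSup_le (hT.image _)
      rintro v ⟨t', ht', rfl⟩
      exact hM s' hs' t' ht'
    exact h1.trans (le_csSup hb2 ⟨s, hs, rfl⟩)

noncomputable def sup4 (P Q : Set X) : ℝ :=
  sSup ((fun r : (OnePoint (EuclideanSpace ℝ (Fin n)) × OnePoint (EuclideanSpace ℝ (Fin n))) ×
      (OnePoint (EuclideanSpace ℝ (Fin n)) × OnePoint (EuclideanSpace ℝ (Fin n))) =>
    Real.log (1 + qCross r.2.1 r.1.1 r.2.2 r.1.2)) '' ((P ×ˢ P) ×ˢ (Q ×ˢ Q)))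

lemma deltaDiam_eq_sup4 (E F : Set X) (hE : E.Nonempty) (hbF : (frontier F).Nonempty)
    (M : ℝ)
    (hM : ∀ x ∈ E, ∀ y ∈ E, ∀ a ∈ frontier F, ∀ b ∈ frontier F,
      Real.log (1 + qCross a x b y) ≤ M) :
    deltaDiam Fᶜ E = sup4 E (frontier F) := by
  unfold deltaDiam deltaHat sup4
  rw [frontier_compl]
  exact sSup_sSup_image (fun p q : OnePoint (EuclideanSpace ℝ (Fin n)) × _ =>
    Real.log (1 + qCross q.1 p.1 q.2 p.2)) (E ×ˢ E) (frontier F ×ˢ frontier F)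
    (hE.prod hE) (hbF.prod hbF) M
    (by rintro ⟨x, y⟩ ⟨hx, hy⟩ ⟨a, b⟩ ⟨ha, hb⟩; exact hM x hx y hy a ha b hb)

lemma exists_bound {E F : Set X} (hd : closure E ∩ closure F = ∅)
    (hE : E.Nonempty) (hF : F.Nonempty) :
    ∃ M : ℝ, ∀ x ∈ closure E, ∀ y ∈ closure E, ∀ a ∈ closure F, ∀ b ∈ closure F,
      Real.log (1 + qCross a x b y) ≤ M := by
  have hdis : ∀ p ∈ closure E, ∀ q ∈ closure F, p ≠ q := by
    intro p hp q hq he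
    exact Set.eq_empty_iff_forall_notMem.1 hd p ⟨hp, he ▸ hq⟩
  have hKc : IsCompact ((closure E) ×ˢ (closure F)) :=
    (isClosed_closure.isCompact).prod (isClosed_closure.isCompact)
  have hne : ((closure E) ×ˢ (closure F)).Nonempty :=
    (hE.closure).prod (hF.closure)
  obtain ⟨z, hz, hmin⟩ := hKc.exists_isMinOn hne (continuous_chordal.continuousOn)
  set m : ℝ := chordal z.1 z.2 with hm_def
  have hmpos : 0 < m := chordal_pos (hdis z.1 hz.1 z.2 hz.2)
  refine ⟨Real.log (1 + 1 / (m * m)), ?_⟩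
  intro x hx y hy a ha b hb
  have h1 : m ≤ chordal a x := hmin (Set.mk_mem_prod hx ha) |>.trans_eq (chordal_comm x a)
  have h2 : m ≤ chordal b y := hmin (Set.mk_mem_prod hy hb) |>.trans_eq (chordal_comm y b)
  have hq : qCross a x b y ≤ 1 / (m * m) := by
    unfold qCross
    apply div_le_div₀ zero_le_one
    · exact mul_le_one₀ (chordal_le_one _ _) (chordal_nonneg _ _) (chordal_le_one _ _)
    · positivity
    · exact mul_le_mul h1 h2 hmpos.le (chordal_nonneg _ _)
  have hpos : (0:ℝ) < 1 + qCross a x b y := by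
    have := qCross_nonneg a x b y; linarith
  exact Real.log_le_log hpos (by linarith)

lemma sup4_closure {E F : Set X} (hd : closure E ∩ closure F = ∅)
    (hE : E.Nonempty) (hbF : (frontier F).Nonempty) (M : ℝ)
    (hM : ∀ x ∈ closure E, ∀ y ∈ closure E, ∀ a ∈ closure F, ∀ b ∈ closure F,
      Real.log (1 + qCross a x b y) ≤ M) :
    sup4 E (frontier F) = sup4 (closure E) (frontier F) := by
  have hdis : ∀ p ∈ closure E, ∀ q ∈ closure F, p ≠ q := by
    intro p hp q hq he
    exact Set.eq_empty_iff_forall_notMem.1 hd p ⟨hp, he ▸ hq⟩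
  have hbdd : BddAbove ((fun r : (OnePoint (EuclideanSpace ℝ (Fin n)) × _) × _ =>
      Real.log (1 + qCross r.2.1 r.1.1 r.2.2 r.1.2)) ''
      (((closure E) ×ˢ (closure E)) ×ˢ ((frontier F) ×ˢ (frontier F)))) := by
    refine ⟨M, ?_⟩
    rintro v ⟨⟨⟨x, y⟩, ⟨a, b⟩⟩, ⟨⟨hx, hy⟩, ⟨ha, hb⟩⟩, rfl⟩
    exact hM x hx y hy a (frontier_subset_closure ha) b (frontier_subset_closure hb)
  have hbddE : BddAbove ((fun r : (OnePoint (EuclideanSpace ℝ (Fin n)) × _) × _ =>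
      Real.log (1 + qCross r.2.1 r.1.1 r.2.2 r.1.2)) ''
      ((E ×ˢ E) ×ˢ ((frontier F) ×ˢ (frontier F)))) := by
    apply hbdd.mono
    apply Set.image_mono
    apply Set.prod_mono _ subset_rfl
    exact Set.prod_mono subset_closure subset_closure
  apply le_antisymm
  · apply csSup_le_csSup hbdd
    · exact ((hE.prod hE).prod (hbF.prod hbF)).image _
    · apply Set.image_mono
      apply Set.prod_mono _ subset_rfl
      exact Set.prod_mono subset_closure subset_closure
  · apply csSup_le ((((hE.closure.prod hE.closure).prod (hbF.prod hbF))).image _)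
    rintro v ⟨⟨⟨x, y⟩, ⟨a, b⟩⟩, ⟨⟨hx, hy⟩, ⟨ha, hb⟩⟩, rfl⟩
    have haF : a ∈ closure F := frontier_subset_closure ha
    have hbF' : b ∈ closure F := frontier_subset_closure hb
    have hax : a ≠ x := (hdis x hx a haF).symm
    have hby : b ≠ y := (hdis y hy b hbF').symm
    have hne : (nhdsWithin (x, y) (E ×ˢ E)).NeBot := by
      apply mem_closure_iff_nhdsWithin_neBot.1
      rw [closure_prod_eq]
      exact ⟨hx, hy⟩
    have htd : Filter.Tendsto (fun p : OnePoint (EuclideanSpace ℝ (Fin n)) × _ =>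
        Real.log (1 + qCross a p.1 b p.2)) (nhdsWithin (x, y) (E ×ˢ E))
        (nhds (Real.log (1 + qCross a x b y))) :=
      ((continuousAt_logq_pair a b (z := (x, y)) hax hby).continuousWithinAt).tendsto
    apply le_of_tendsto htd
    filter_upwards [eventually_mem_nhdsWithin] with p hp
    exact le_csSup hbddE ⟨(p, (a, b)), ⟨hp, ⟨ha, hb⟩⟩, rfl⟩

lemma qCross_swap' (a x b y : X) : qCross a x b y = qCross b y a x := by
  unfold qCross
  rw [chordal_comm b a, chordal_comm y x, chordal_comm b y, chordal_comm a x]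
  ring

lemma sup4_frontier {E F : Set X} (hd : closure E ∩ closure F = ∅)
    (hc : PreconnectedSpace X)
    (hE : E.Nonempty) (hbE : (frontier E).Nonempty) (hbF : (frontier F).Nonempty) (M : ℝ)
    (hM : ∀ x ∈ closure E, ∀ y ∈ closure E, ∀ a ∈ closure F, ∀ b ∈ closure F,
      Real.log (1 + qCross a x b y) ≤ M) :
    sup4 (closure E) (frontier F) = sup4 (frontier E) (frontier F) := by
  have hbddE : BddAbove ((fun r : (OnePoint (EuclideanSpace ℝ (Fin n)) × _) × _ =>
      Real.log (1 + qCross r.2.1 r.1.1 r.2.2 r.1.2)) ''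
      (((frontier E) ×ˢ (frontier E)) ×ˢ ((frontier F) ×ˢ (frontier F)))) := by
    refine ⟨M, ?_⟩
    rintro v ⟨⟨⟨x, y⟩, ⟨a, b⟩⟩, ⟨⟨hx, hy⟩, ⟨ha, hb⟩⟩, rfl⟩
    exact hM x (frontier_subset_closure hx) y (frontier_subset_closure hy)
      a (frontier_subset_closure ha) b (frontier_subset_closure hb)
  have hbdd : BddAbove ((fun r : (OnePoint (EuclideanSpace ℝ (Fin n)) × _) × _ =>
      Real.log (1 + qCross r.2.1 r.1.1 r.2.2 r.1.2)) ''
      (((closure E) ×ˢ (closure E)) ×ˢ ((frontier F) ×ˢ (frontier F)))) := by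
    refine ⟨M, ?_⟩
    rintro v ⟨⟨⟨x, y⟩, ⟨a, b⟩⟩, ⟨⟨hx, hy⟩, ⟨ha, hb⟩⟩, rfl⟩
    exact hM x hx y hy a (frontier_subset_closure ha) b (frontier_subset_closure hb)
  apply le_antisymm
  · apply csSup_le (((hE.closure.prod hE.closure).prod (hbF.prod hbF)).image _)
    rintro v ⟨⟨⟨x, y⟩, ⟨a, b⟩⟩, ⟨⟨hx, hy⟩, ⟨ha, hb⟩⟩, rfl⟩
    have haF : a ∈ closure F := frontier_subset_closure ha
    have hbF' : b ∈ closure F := frontier_subset_closure hb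
    obtain ⟨x', hx'fr, h1⟩ := exists_frontier_ge hd hc haF hbF' hy hx
    have hx'cl : x' ∈ closure E := by
      have := frontier_subset_closure hx'fr
      rwa [closure_closure] at this
    obtain ⟨y', hy'fr, h2⟩ := exists_frontier_ge hd hc hbF' haF hx'cl hy
    rw [qCross_swap' b y a x'] at h2
    rw [qCross_swap' b y' a x'] at h2
    calc Real.log (1 + qCross a x b y) ≤ Real.log (1 + qCross a x' b y) := h1
      _ ≤ Real.log (1 + qCross a x' b y') := h2
      _ ≤ _ := le_csSup hbddE ⟨((x', y'), (a, b)),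
          ⟨⟨frontier_closure_subset hx'fr, frontier_closure_subset hy'fr⟩, ⟨ha, hb⟩⟩, rfl⟩
  · apply csSup_le_csSup hbdd
    · exact ((hbE.prod hbE).prod (hbF.prod hbF)).image _
    · apply Set.image_mono
      apply Set.prod_mono _ subset_rfl
      exact Set.prod_mono frontier_subset_closure frontier_subset_closure

lemma sup4_symm (E F : Set X) : sup4 (frontier E) (frontier F) = sup4 (frontier F) (frontier E) := by
  unfold sup4
  congr 1
  ext v
  constructor
  · rintro ⟨⟨⟨x, y⟩, ⟨a, b⟩⟩, ⟨⟨hx, hy⟩, ⟨ha, hb⟩⟩, rfl⟩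
    exact ⟨((a, b), (x, y)), ⟨⟨ha, hb⟩, ⟨hx, hy⟩⟩, by simp [← qCross_swap a x b y]⟩
  · rintro ⟨⟨⟨a, b⟩, ⟨x, y⟩⟩, ⟨⟨ha, hb⟩, ⟨hx, hy⟩⟩, rfl⟩
    exact ⟨((x, y), (a, b)), ⟨⟨hx, hy⟩, ⟨ha, hb⟩⟩, by simp [← qCross_swap x a y b]⟩

lemma deltaDiam_of_frontier_empty (G S : Set X) (hG : frontier G = ∅) (hS : S.Nonempty) :
    deltaDiam G S = 0 := by
  unfold deltaDiam deltaHat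
  rw [hG]
  simp only [Set.empty_prod, Set.image_empty, Real.sSup_empty]
  rw [(hS.prod hS).image_const]
  exact csSup_singleton 0


/-- Symmetry of `δ(E,F) = δ_{ℝ̂ⁿ∖F}(E)`: for nonempty `E,F ⊆ ℝ̂ⁿ` with disjoint
closures, `δ_{ℝ̂ⁿ∖F}(E) = δ_{ℝ̂ⁿ∖E}(F)`. -/
theorem stmt16 (n : ℕ) (E F : Set (OnePoint (EuclideanSpace ℝ (Fin n))))
    (hE : E.Nonempty) (hF : F.Nonempty) (hd : closure E ∩ closure F = ∅) :
    deltaDiam Fᶜ E = deltaDiam Eᶜ F := by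
  by_cases hn : Nontrivial (EuclideanSpace ℝ (Fin n))
  · haveI := hn
    have hpc : PreconnectedSpace (OnePoint (EuclideanSpace ℝ (Fin n))) :=
      (OnePoint.denseRange_coe).preconnectedSpace OnePoint.continuous_coe
    haveI := hpc
    have hFu : F ≠ univ := by
      intro h
      have h2 : closure E = ∅ := by
        have : closure F = univ := by rw [h, closure_univ]
        rw [this, Set.inter_univ] at hd
        exact hd
      exact (hE.closure).ne_empty h2
    have hEu : E ≠ univ := by
      intro h
      have h2 : closure F = ∅ := by
        have : closure E = univ := by rw [h, closure_univ]
        rw [this, Set.univ_inter] at hd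
        exact hd
      exact (hF.closure).ne_empty h2
    have hbF : (frontier F).Nonempty := nonempty_frontier_iff.2 ⟨hF, hFu⟩
    have hbE : (frontier E).Nonempty := nonempty_frontier_iff.2 ⟨hE, hEu⟩
    obtain ⟨M, hM⟩ := exists_bound hd hE hF
    have hd' : closure F ∩ closure E = ∅ := by rwa [Set.inter_comm]
    obtain ⟨M', hM'⟩ := exists_bound hd' hF hE
    rw [deltaDiam_eq_sup4 E F hE hbF M (fun x hx y hy a ha b hb =>
        hM x (subset_closure hx) y (subset_closure hy) a (frontier_subset_closure ha)
          b (frontier_subset_closure hb)),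
      sup4_closure hd hE hbF M hM,
      sup4_frontier hd hpc hE hbE hbF M hM,
      sup4_symm,
      ← sup4_frontier hd' hpc hF hbF hbE M' hM',
      ← sup4_closure hd' hF hbE M' hM',
      ← deltaDiam_eq_sup4 F E hF hbE M' (fun x hx y hy a ha b hb =>
        hM' x (subset_closure hx) y (subset_closure hy) a (frontier_subset_closure ha)
          b (frontier_subset_closure hb))]
  · haveI := not_nontrivial_iff_subsingleton.mp hn
    haveI : Unique (EuclideanSpace ℝ (Fin n)) := uniqueOfSubsingleton 0
    haveI : Finite (OnePoint (EuclideanSpace ℝ (Fin n))) :=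
      inferInstanceAs (Finite (Option (EuclideanSpace ℝ (Fin n))))
    haveI : DiscreteTopology (OnePoint (EuclideanSpace ℝ (Fin n))) :=
      Finite.instDiscreteTopology
    have h1 : frontier Fᶜ = ∅ :=
      isClopen_iff_frontier_eq_empty.1 ⟨isClosed_discrete _, isOpen_discrete _⟩
    have h2 : frontier Eᶜ = ∅ :=
      isClopen_iff_frontier_eq_empty.1 ⟨isClosed_discrete _, isOpen_discrete _⟩
    rw [deltaDiam_of_frontier_empty _ _ h1 hE, deltaDiam_of_frontier_empty _ _ h2 hF]
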